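/- Let d ≥ 1 and let α : ℝ^d × ℝ^d → ℝ^d be continuous and satisfy the cocycle identity α(x, v+w) = α(x,v) + α(x+v, w). Let A : ℝ^d → ℝ^d be an ℝ-linear map, and let ε > 0 and r > 0 be such that ‖r^{−d} ∫_{C_r} α(x+s, v) ds − A(v)‖ ≤ ε for all x ∈ ℝ^d and all v with ‖v‖ ≤ 2. Then for all x ∈ ℝ^d and all v ∈ ℝ^d, ‖r^{−d} ∫_{C_r} α(x+s, v) ds − A(v)‖ ≤ ε·max(‖v‖, 1). -/

import Mathlib

open MeasureTheory

/-- `Euc d` is `d`-dimensional Euclidean space. -/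
abbrev Euc (d : ℕ) := EuclideanSpace ℝ (Fin d)

/-- The cube `[-r/2, r/2]^d` in `ℝ^d`. -/
def cube (d : ℕ) (r : ℝ) : Set (Euc d) :=
  {s | ∀ i, s i ∈ Set.Icc (-(r / 2)) (r / 2)}

lemma cube_isCompact (d : ℕ) (r : ℝ) : IsCompact (cube d r) := by
  have h : cube d r = (EuclideanSpace.equiv (Fin d) ℝ) ⁻¹' Set.univ.pi (fun _ : Fin d => Set.Icc (-(r / 2)) (r / 2)) := by
    ext s; exact ⟨fun h i _ => h i, fun h i => h i (Set.mem_univ i)⟩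
  rw [h]
  exact (EuclideanSpace.equiv (Fin d) ℝ).toHomeomorph.isCompact_preimage.mpr (isCompact_univ_pi fun _ => isCompact_Icc)

lemma integrable_aux {d : ℕ} {α : Euc d → Euc d → Euc d}
    (hαcont : Continuous fun p : Euc d × Euc d => α p.1 p.2)
    (r : ℝ) (y w : Euc d) : IntegrableOn (fun s => α (y + s) w) (cube d r) := by
  have hc : Continuous fun s : Euc d => α (y + s) w :=
    hαcont.comp ((continuous_const.add continuous_id).prodMk continuous_const)
  exact hc.continuousOn.integrableOn_compact (cube_isCompact d r)

lemma split_integral {d : ℕ} {α : Euc d → Euc d → Euc d}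
    (hαcont : Continuous fun p : Euc d × Euc d => α p.1 p.2)
    (hcoc : ∀ x v w : Euc d, α x (v + w) = α x v + α (x + v) w)
    (r : ℝ) (x u : Euc d) (n : ℕ) :
    ∫ s in cube d r, α (x + s) (n • u) =
      ∑ k ∈ Finset.range n, ∫ s in cube d r, α (x + k • u + s) u := by
  induction n with
  | zero =>
    have h0 : ∀ y : Euc d, α y (0 : Euc d) = 0 := by
      intro y
      have h := hcoc y 0 0
      simp only [add_zero] at h
      exact (left_eq_add.mp h)
    simp [h0]
  | succ n ih =>
    have heq : (fun s : Euc d => α (x + s) ((n + 1) • u)) =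
        fun s => α (x + s) (n • u) + α (x + n • u + s) u := by
      funext s
      rw [succ_nsmul, hcoc]
      congr 2
      abel
    rw [heq, integral_add (integrable_aux hαcont r x (n • u))
      (integrable_aux hαcont r (x + n • u) u), ih, Finset.sum_range_succ]

theorem cube_average_approx_extend
    (d : ℕ) (hd : 1 ≤ d)
    (α : Euc d → Euc d → Euc d)
    (hαcont : Continuous fun p : Euc d × Euc d => α p.1 p.2)
    (hcoc : ∀ x v w : Euc d, α x (v + w) = α x v + α (x + v) w)
    (A : Euc d →ₗ[ℝ] Euc d)
    (ε r : ℝ) (hε : 0 < ε) (hr : 0 < r)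
    (hsmall : ∀ x v : Euc d, ‖v‖ ≤ 2 →
      ‖(r ^ d)⁻¹ • (∫ s in cube d r, α (x + s) v) - A v‖ ≤ ε) :
    ∀ x v : Euc d,
      ‖(r ^ d)⁻¹ • (∫ s in cube d r, α (x + s) v) - A v‖ ≤ ε * max ‖v‖ 1 := by
  have key : ∀ (x : Euc d) (n : ℕ), 0 < n → ∀ v : Euc d, ‖((n : ℝ)⁻¹) • v‖ ≤ 2 →
      ‖(r ^ d)⁻¹ • (∫ s in cube d r, α (x + s) v) - A v‖ ≤ n * ε := by
    intro x n hn v hu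
    have hn0 : (n : ℝ) ≠ 0 := Nat.cast_ne_zero.mpr hn.ne'
    set u := (n : ℝ)⁻¹ • v with hu_def
    have hv : v = n • u := by
      rw [hu_def, Nat.cast_smul_eq_nsmul ℝ n ((n : ℝ)⁻¹ • v) |>.symm, smul_inv_smul₀ hn0]
    calc ‖(r ^ d)⁻¹ • (∫ s in cube d r, α (x + s) v) - A v‖
        = ‖∑ k ∈ Finset.range n,
            ((r ^ d)⁻¹ • (∫ s in cube d r, α (x + k • u + s) u) - A u)‖ := by
          rw [hv, split_integral hαcont hcoc r x u n, Finset.sum_sub_distrib,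
            ← Finset.smul_sum, map_nsmul, Finset.sum_const, Finset.card_range]
      _ ≤ ∑ k ∈ Finset.range n,
            ‖(r ^ d)⁻¹ • (∫ s in cube d r, α (x + k • u + s) u) - A u‖ :=
          norm_sum_le _ _
      _ ≤ ∑ _k ∈ Finset.range n, ε := by
          apply Finset.sum_le_sum
          intro k _
          exact hsmall (x + k • u) u hu
      _ = n * ε := by rw [Finset.sum_const, Finset.card_range, nsmul_eq_mul]
  intro x v
  by_cases h2 : ‖v‖ ≤ 2
  · calc ‖(r ^ d)⁻¹ • (∫ s in cube d r, α (x + s) v) - A v‖ ≤ ε := hsmall x v h2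
      _ ≤ ε * max ‖v‖ 1 := le_mul_of_one_le_right hε.le (le_max_right _ _)
  · push_neg at h2
    set n := ⌈‖v‖ / 2⌉₊ with hn_def
    have hn1 : 0 < n := Nat.ceil_pos.mpr (by linarith)
    have hle : ‖v‖ / 2 ≤ (n : ℝ) := Nat.le_ceil _
    have hnv : (n : ℝ) ≤ ‖v‖ := by
      have h := Nat.ceil_lt_add_one (show (0 : ℝ) ≤ ‖v‖ / 2 by linarith)
      rw [← hn_def] at h
      linarith
    have hu : ‖((n : ℝ)⁻¹) • v‖ ≤ 2 := by
      rw [norm_smul, Real.norm_eq_abs, abs_inv, abs_of_nonneg (Nat.cast_nonneg n)]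
      rw [inv_mul_le_iff₀ (by exact_mod_cast hn1)]
      linarith
    calc ‖(r ^ d)⁻¹ • (∫ s in cube d r, α (x + s) v) - A v‖ ≤ n * ε := key x n hn1 v hu
      _ ≤ ε * max ‖v‖ 1 := by
        rw [max_eq_left (by linarith : (1 : ℝ) ≤ ‖v‖)]
        nlinarith
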